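/- Let H be a complex inner product space, let A, B : H → H be symmetric linear maps (⟨Au, v⟩ = ⟨u, Av⟩ and similarly for B), and let ψ ∈ H with ‖ψ‖ = 1. Set ⟨A⟩_ψ = ⟨Aψ, ψ⟩, (ΔA)_ψ² = ⟨A²⟩_ψ − ⟨A⟩_ψ², (ΔB)_ψ² = ⟨B²⟩_ψ − ⟨B⟩_ψ², Δ(A,B)_ψ = (1/2)⟨(AB + BA)ψ, ψ⟩ − ⟨A⟩_ψ⟨B⟩_ψ, and ⟨[A,B]⟩_ψ = ⟨(AB − BA)ψ, ψ⟩. Then (ΔA)_ψ² (ΔB)_ψ² ≥ Δ(A,B)_ψ² + (1/4)|⟨[A,B]⟩_ψ|² (Schrödinger's form of the uncertainty principle). -/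

import Mathlib

/-- Schrödinger's form of the uncertainty principle: for symmetric operators `A`, `B` on a
complex inner product space and a unit vector `ψ`,
`(ΔA)²_ψ (ΔB)²_ψ ≥ Δ(A,B)²_ψ + (1/4)|⟨[A,B]⟩_ψ|²`. -/
theorem schroedinger_uncertainty {H : Type*} [NormedAddCommGroup H] [InnerProductSpace ℂ H]
    (A B : H →ₗ[ℂ] H)
    (hA : ∀ u v : H, (inner ℂ (A u) v : ℂ) = inner ℂ u (A v))
    (hB : ∀ u v : H, (inner ℂ (B u) v : ℂ) = inner ℂ u (B v))
    (ψ : H) (hψ : ‖ψ‖ = 1) :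
    ((inner ℂ (A (A ψ)) ψ : ℂ).re - ((inner ℂ (A ψ) ψ : ℂ).re) ^ 2) *
      ((inner ℂ (B (B ψ)) ψ : ℂ).re - ((inner ℂ (B ψ) ψ : ℂ).re) ^ 2) ≥
    ((1 / 2) * (inner ℂ (A (B ψ) + B (A ψ)) ψ : ℂ).re -
        (inner ℂ (A ψ) ψ : ℂ).re * (inner ℂ (B ψ) ψ : ℂ).re) ^ 2 +
      (1 / 4) * ‖(inner ℂ (A (B ψ) - B (A ψ)) ψ : ℂ)‖ ^ 2 := by
  have hnorm : ∀ w : ℂ, ‖w‖ ^ 2 = w.re ^ 2 + w.im ^ 2 := fun w => by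
    rw [Complex.sq_norm, Complex.normSq_apply]; ring
  have hψψ : (inner ℂ ψ ψ : ℂ) = 1 := by
    rw [inner_self_eq_norm_sq_to_K, hψ]; norm_num
  set a : ℝ := (inner ℂ (A ψ) ψ : ℂ).re with ha
  set b : ℝ := (inner ℂ (B ψ) ψ : ℂ).re with hb
  set z : ℂ := inner ℂ (A ψ) (B ψ) with hz
  have hαr : (inner ℂ (A ψ) ψ : ℂ) = (a : ℂ) := by
    have hc : (starRingEnd ℂ) (inner ℂ (A ψ) ψ : ℂ) = inner ℂ (A ψ) ψ := by
      rw [inner_conj_symm, hA]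
    exact ((Complex.conj_eq_iff_re.mp hc)).symm
  have hβr : (inner ℂ (B ψ) ψ : ℂ) = (b : ℂ) := by
    have hc : (starRingEnd ℂ) (inner ℂ (B ψ) ψ : ℂ) = inner ℂ (B ψ) ψ := by
      rw [inner_conj_symm, hB]
    exact ((Complex.conj_eq_iff_re.mp hc)).symm
  have hAA : (inner ℂ (A (A ψ)) ψ : ℂ) = inner ℂ (A ψ) (A ψ) := hA (A ψ) ψ
  have hBB : (inner ℂ (B (B ψ)) ψ : ℂ) = inner ℂ (B ψ) (B ψ) := hB (B ψ) ψ
  have hψA : (inner ℂ ψ (A ψ) : ℂ) = (a : ℂ) := by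
    rw [← inner_conj_symm, hαr, Complex.conj_ofReal]
  have hψB : (inner ℂ ψ (B ψ) : ℂ) = (b : ℂ) := by
    rw [← inner_conj_symm, hβr, Complex.conj_ofReal]
  have hAB : (inner ℂ (A (B ψ)) ψ : ℂ) = (starRingEnd ℂ) z := by
    rw [hA (B ψ) ψ, ← inner_conj_symm]
  have hBA : (inner ℂ (B (A ψ)) ψ : ℂ) = z := hB (A ψ) ψ
  set f : H := A ψ - (a : ℂ) • ψ with hf
  set g : H := B ψ - (b : ℂ) • ψ with hg
  have hfg : (inner ℂ f g : ℂ) = z - ((a * b : ℝ) : ℂ) := by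
    simp only [hf, hg, inner_sub_left, inner_sub_right, inner_smul_left, inner_smul_right,
      hψψ, Complex.conj_ofReal, hαr, hψB]
    push_cast
    ring
  have hff : ‖f‖ ^ 2 = (inner ℂ (A ψ) (A ψ) : ℂ).re - a ^ 2 := by
    have h1 : (inner ℂ f f : ℂ) = inner ℂ (A ψ) (A ψ) - ((a ^ 2 : ℝ) : ℂ) := by
      simp only [hf, inner_sub_left, inner_sub_right, inner_smul_left, inner_smul_right,
        hψψ, Complex.conj_ofReal, hαr, hψA]
      push_cast
      ring
    have h2 : (inner ℂ f f : ℂ) = ((‖f‖ ^ 2 : ℝ) : ℂ) := by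
      rw [inner_self_eq_norm_sq_to_K]; norm_cast
    rw [h1] at h2
    have := congrArg Complex.re h2
    simpa [← Complex.ofReal_pow] using this.symm
  have hgg : ‖g‖ ^ 2 = (inner ℂ (B ψ) (B ψ) : ℂ).re - b ^ 2 := by
    have h1 : (inner ℂ g g : ℂ) = inner ℂ (B ψ) (B ψ) - ((b ^ 2 : ℝ) : ℂ) := by
      simp only [hg, inner_sub_left, inner_sub_right, inner_smul_left, inner_smul_right,
        hψψ, Complex.conj_ofReal, hβr, hψB]
      push_cast
      ring
    have h2 : (inner ℂ g g : ℂ) = ((‖g‖ ^ 2 : ℝ) : ℂ) := by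
      rw [inner_self_eq_norm_sq_to_K]; norm_cast
    rw [h1] at h2
    have := congrArg Complex.re h2
    simpa [← Complex.ofReal_pow] using this.symm
  have hcs : ‖(inner ℂ f g : ℂ)‖ ^ 2 ≤ ‖f‖ ^ 2 * ‖g‖ ^ 2 := by
    have := norm_inner_le_norm (𝕜 := ℂ) f g
    nlinarith [norm_nonneg (inner ℂ f g : ℂ), norm_nonneg f, norm_nonneg g]
  rw [hfg, hnorm] at hcs
  simp only [Complex.sub_re, Complex.sub_im, Complex.ofReal_re, Complex.ofReal_im] at hcs
  have hsum : (inner ℂ (A (B ψ) + B (A ψ)) ψ : ℂ).re = 2 * z.re := by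
    rw [inner_add_left, hAB, hBA]
    simp [Complex.add_re, Complex.conj_re]; ring
  have hdiff : ‖(inner ℂ (A (B ψ) - B (A ψ)) ψ : ℂ)‖ ^ 2 = 4 * z.im ^ 2 := by
    rw [inner_sub_left, hAB, hBA, hnorm]
    simp [Complex.sub_re, Complex.sub_im, Complex.conj_re, Complex.conj_im]
    ring
  rw [hAA, hBB, hsum, hdiff]
  rw [← hff, ← hgg]
  nlinarith [hcs]
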